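/- Let $a > 0$ be a real number. Suppose $z \in \mathbb{C}^5$ satisfies ($z_3 z_4 z_5 \ne 0$ or $z_1 z_3 z_5 \ne 0$ or $z_1 z_2 z_5 \ne 0$ or $z_2 z_4 z_5 \ne 0$), and suppose $t \in \mathbb{C}$ and $\lambda \in \mathbb{C}\setminus\{0\}$ satisfy $(e^{-2\pi t} z_1,\ e^{2\pi i t} z_2,\ e^{2\pi i (1+ia) t} z_3,\ e^{-2\pi t} z_4,\ z_5) = (\lambda z_1, \lambda z_2, \lambda z_3, \lambda z_4, \lambda z_5)$. Then $t = 0$ and $\lambda = 1$. -/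
import Mathlib

private lemma key_t (a : ℝ) (t : ℂ)
    (e1 : Complex.exp (-(2 * (Real.pi : ℂ)) * t) = 1)
    (e2 : Complex.exp (2 * (Real.pi : ℂ) * Complex.I * t) = 1 ∨
      Complex.exp (2 * (Real.pi : ℂ) * Complex.I * (1 + Complex.I * (a : ℂ)) * t) = 1) :
    t = 0 := by
  have hπ : (Real.pi : ℂ) ≠ 0 := by exact_mod_cast Real.pi_ne_zero
  have h2π : (2 * (Real.pi : ℂ)) ≠ 0 := by simp [hπ]
  have h2πI : (2 * (Real.pi : ℂ) * Complex.I) ≠ 0 := by simp [hπ, Complex.I_ne_zero]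
  rw [Complex.exp_eq_one_iff] at e1
  obtain ⟨n, hn⟩ := e1
  have ht : t = -(n : ℂ) * Complex.I := by
    have : (2 * (Real.pi : ℂ)) * t = (2 * (Real.pi : ℂ)) * (-(n:ℂ) * Complex.I) := by
      linear_combination -hn
    exact mul_left_cancel₀ h2π this
  rcases e2 with e2 | e2 <;> rw [Complex.exp_eq_one_iff] at e2 <;> obtain ⟨m, hm⟩ := e2
  · have ht2 : t = (m : ℂ) := by
      apply mul_left_cancel₀ h2πI
      linear_combination hm
    have : -(n : ℂ) * Complex.I = (m : ℂ) := by rw [← ht, ht2]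
    have him := congrArg Complex.im this
    simp at him
    rw [ht, him]; simp
  · have ht2 : (1 + Complex.I * (a : ℂ)) * t = (m : ℂ) := by
      apply mul_left_cancel₀ h2πI
      linear_combination hm
    rw [ht] at ht2
    have : -(n:ℂ) * Complex.I + (n:ℂ) * (a:ℂ) = (m:ℂ) := by
      linear_combination ht2 + (n:ℂ)*(a:ℂ) * Complex.I_sq
    have him := congrArg Complex.im this
    simp at him
    rw [ht, him]; simp

/-- Freeness of the `ℂ_Λ`-action on `U(𝕋*)`: if `z ∈ ℂ⁵` lies in the relevant open set and
`(e^{-2πt}z₁, e^{2πit}z₂, e^{2πi(1+ia)t}z₃, e^{-2πt}z₄, z₅) = λ·z` with `λ ≠ 0`,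
then `t = 0` and `λ = 1`. -/
theorem action_free (a : ℝ) (ha : 0 < a) (z : Fin 5 → ℂ)
    (hz : z 2 * z 3 * z 4 ≠ 0 ∨ z 0 * z 2 * z 4 ≠ 0 ∨ z 0 * z 1 * z 4 ≠ 0 ∨
      z 1 * z 3 * z 4 ≠ 0)
    (t : ℂ) (lam : ℂ) (hlam : lam ≠ 0)
    (h1 : Complex.exp (-(2 * (Real.pi : ℂ)) * t) * z 0 = lam * z 0)
    (h2 : Complex.exp (2 * (Real.pi : ℂ) * Complex.I * t) * z 1 = lam * z 1)
    (h3 : Complex.exp (2 * (Real.pi : ℂ) * Complex.I * (1 + Complex.I * (a : ℂ)) * t) * z 2 =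
      lam * z 2)
    (h4 : Complex.exp (-(2 * (Real.pi : ℂ)) * t) * z 3 = lam * z 3)
    (h5 : z 4 = lam * z 4) :
    t = 0 ∧ lam = 1 := by
  have hz4 : z 4 ≠ 0 := by
    rcases hz with h | h | h | h <;> exact fun h0 => h (by rw [h0]; ring)
  have hlam1 : lam = 1 := by
    have h0 : (lam - 1) * z 4 = 0 := by linear_combination -h5
    rcases mul_eq_zero.mp h0 with h | h
    · exact sub_eq_zero.mp h
    · exact absurd h hz4
  subst hlam1
  refine ⟨?_, rfl⟩
  rcases hz with h | h | h | h <;>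
    have hne := mul_ne_zero_iff.mp (mul_ne_zero_iff.mp h).1
  · exact key_t a t (mul_right_cancel₀ hne.2 h4) (Or.inr (mul_right_cancel₀ hne.1 h3))
  · exact key_t a t (mul_right_cancel₀ hne.1 h1) (Or.inr (mul_right_cancel₀ hne.2 h3))
  · exact key_t a t (mul_right_cancel₀ hne.1 h1) (Or.inl (mul_right_cancel₀ hne.2 h2))
  · exact key_t a t (mul_right_cancel₀ hne.2 h4) (Or.inl (mul_right_cancel₀ hne.1 h2))
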